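/- Let K be the subgroup of diagonal matrices in SU(2), acting on SU(2) by conjugation. The map sending X ∈ SU(2) to its (1,1) entry is constant on the orbits of this action, and the induced map from the orbit space SU(2)/K (the quotient of SU(2) by the orbit equivalence relation of the conjugation action of K) to the closed unit disc {z ∈ ℂ : |z| ≤ 1} is a bijection. -/

import Mathlib

open Matrix Complex

noncomputable section

/-- Any matrix of the standard SU(2) form is in SU(2). -/
lemma su2_of (a b : ℂ) (h : ‖a‖ ^ 2 + ‖b‖ ^ 2 = 1) :
    !![a, b; -starRingEnd ℂ b, starRingEnd ℂ a] ∈ Matrix.specialUnitaryGroup (Fin 2) ℂ := by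
  have habsC : ((‖a‖ : ℝ) : ℂ) ^ 2 + ((‖b‖ : ℝ) : ℂ) ^ 2 = 1 := by
    exact_mod_cast congrArg (Complex.ofReal) h
  have e0 : a * starRingEnd ℂ a = ((‖a‖ : ℝ) : ℂ) ^ 2 := by
    rw [Complex.mul_conj, Complex.normSq_eq_norm_sq]; push_cast; ring
  have e1 : b * starRingEnd ℂ b = ((‖b‖ : ℝ) : ℂ) ^ 2 := by
    rw [Complex.mul_conj, Complex.normSq_eq_norm_sq]; push_cast; ring
  rw [Matrix.mem_specialUnitaryGroup_iff, Matrix.mem_unitaryGroup_iff]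
  constructor
  · ext i j
    fin_cases i <;> fin_cases j <;>
      simp [Matrix.mul_apply, Fin.sum_univ_two, Matrix.one_fin_two, Matrix.star_apply] <;>
      first
      | ring1
      | linear_combination habsC + e0 + e1
  · rw [Matrix.det_fin_two_of]
    linear_combination habsC + e0 + e1

/-- Structure of SU(2) matrices. -/
lemma su2_struct {A : Matrix (Fin 2) (Fin 2) ℂ}
    (hA : A ∈ Matrix.specialUnitaryGroup (Fin 2) ℂ) :
    A = !![A 0 0, A 0 1; -starRingEnd ℂ (A 0 1), starRingEnd ℂ (A 0 0)] ∧
      ‖A 0 0‖ ^ 2 + ‖A 0 1‖ ^ 2 = 1 := by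
  rw [Matrix.mem_specialUnitaryGroup_iff, Matrix.mem_unitaryGroup_iff] at hA
  obtain ⟨hu, hd⟩ := hA
  have hinv : A⁻¹ = star A := Matrix.inv_eq_right_inv hu
  have hadj : A⁻¹ = A.adjugate := by
    rw [Matrix.inv_def, hd]; simp
  have h := hinv.symm.trans hadj
  have h11 : A 1 1 = starRingEnd ℂ (A 0 0) := by
    have := congrFun (congrFun h 0) 0
    simpa [Matrix.adjugate_fin_two, Matrix.star_apply] using this.symm
  have h10 : A 1 0 = - starRingEnd ℂ (A 0 1) := by
    have := congrFun (congrFun h 0) 1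
    simp only [Matrix.adjugate_fin_two, Matrix.star_apply] at this
    have h' : starRingEnd ℂ (A 1 0) = - A 0 1 := by simpa using this
    calc A 1 0 = starRingEnd ℂ (starRingEnd ℂ (A 1 0)) := by simp
      _ = - starRingEnd ℂ (A 0 1) := by rw [h']; simp
  have hdet : A.det = A 0 0 * A 1 1 - A 0 1 * A 1 0 := Matrix.det_fin_two A
  rw [hd, h11, h10] at hdet
  have hsum : A 0 0 * starRingEnd ℂ (A 0 0) + A 0 1 * starRingEnd ℂ (A 0 1) = 1 := by
    linear_combination -hdet
  rw [Complex.mul_conj, Complex.mul_conj] at hsum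
  have hs : Complex.normSq (A 0 0) + Complex.normSq (A 0 1) = 1 := by
    exact_mod_cast hsum
  refine ⟨?_, by simpa [Complex.sq_norm] using hs⟩
  rw [Matrix.eta_fin_two A]
  simp [h11, h10]

end

/-- The orbit relation of the conjugation action of the diagonal subgroup `K` of
`SU(2)` on `SU(2)`: `X ~ Y` iff `Y = k * X * k⁻¹` for some diagonal `k ∈ SU(2)`.
Elements of `SU(2)` are represented as the subtype of matrices in
`Matrix.specialUnitaryGroup (Fin 2) ℂ`. -/
def su2OrbitRel (X Y : Matrix.specialUnitaryGroup (Fin 2) ℂ) : Prop :=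
  ∃ k : Matrix (Fin 2) (Fin 2) ℂ,
    k ∈ Matrix.specialUnitaryGroup (Fin 2) ℂ ∧ k 0 1 = 0 ∧ k 1 0 = 0 ∧
    k * (X : Matrix (Fin 2) (Fin 2) ℂ) * k⁻¹ = (Y : Matrix (Fin 2) (Fin 2) ℂ)

/-- Constancy of the (1,1) entry on orbits. -/
lemma su2_const (X Y : Matrix.specialUnitaryGroup (Fin 2) ℂ) (h : su2OrbitRel X Y) :
    (X : Matrix (Fin 2) (Fin 2) ℂ) 0 0 = (Y : Matrix (Fin 2) (Fin 2) ℂ) 0 0 := by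
  obtain ⟨k, hk, hk01, hk10, hconj⟩ := h
  have hkdet : k.det = 1 := (Matrix.mem_specialUnitaryGroup_iff.mp hk).2
  have hdet2 : k 0 0 * k 1 1 = 1 := by
    have h := Matrix.det_fin_two k
    rw [hkdet, hk01, hk10] at h
    linear_combination -h
  have hkinv : k⁻¹ = k.adjugate := by rw [Matrix.inv_def, hkdet]; simp
  have h00 := congrFun (congrFun hconj 0) 0
  rw [hkinv] at h00
  simp [Matrix.mul_apply, Fin.sum_univ_two, Matrix.adjugate_fin_two, hk01, hk10] at h00
  linear_combination h00 - (X : Matrix (Fin 2) (Fin 2) ℂ) 0 0 * hdet2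

/-- Same (1,1) entry implies related. -/
lemma su2_rel_of_eq (X Y : Matrix.specialUnitaryGroup (Fin 2) ℂ)
    (h : (X : Matrix (Fin 2) (Fin 2) ℂ) 0 0 = (Y : Matrix (Fin 2) (Fin 2) ℂ) 0 0) :
    su2OrbitRel X Y := by
  obtain ⟨hXeta, hXabs⟩ := su2_struct X.2
  obtain ⟨hYeta, hYabs⟩ := su2_struct Y.2
  set z := (X : Matrix (Fin 2) (Fin 2) ℂ) 0 0 with hz
  set w := (X : Matrix (Fin 2) (Fin 2) ℂ) 0 1 with hw
  set v := (Y : Matrix (Fin 2) (Fin 2) ℂ) 0 1 with hv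
  have habs_wv : ‖w‖ = ‖v‖ := by
    rw [← h] at hYabs
    nlinarith [norm_nonneg w, norm_nonneg v]
  by_cases hw0 : w = 0
  · have hv0 : v = 0 := by
      rw [hw0, norm_zero] at habs_wv
      exact norm_eq_zero.mp habs_wv.symm
    refine ⟨1, one_mem _, by simp [Matrix.one_apply], by simp [Matrix.one_apply], ?_⟩
    simp only [one_mul, inv_one, mul_one]
    rw [hXeta, hYeta, ← h, hw0, hv0]
  · -- choose a with a^2 = v / w
    obtain ⟨a, ha2⟩ := IsAlgClosed.exists_pow_nat_eq (k := ℂ) (v / w) zero_lt_two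
    have hva : a ^ 2 * w = v := by rw [ha2]; field_simp
    have habs_a : ‖a‖ = 1 := by
      have h2 : ‖a‖ ^ 2 = 1 := by
        have : ‖a ^ 2‖ = ‖v / w‖ := by rw [ha2]
        rw [norm_pow, norm_div, ← habs_wv, div_self (norm_ne_zero_iff.mpr hw0)] at this
        exact this
      nlinarith [norm_nonneg a]
    have haa : a * starRingEnd ℂ a = 1 := by
      rw [Complex.mul_conj, Complex.normSq_eq_norm_sq, habs_a]; norm_num
    refine ⟨!![a, 0; 0, starRingEnd ℂ a], ?_, by simp, by simp, ?_⟩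
    · have := su2_of a 0 (by simp [habs_a])
      simpa using this
    · have hdet : (!![a, 0; 0, starRingEnd ℂ a]).det = 1 := by
        rw [Matrix.det_fin_two_of]; simpa using haa
      have hkinv : (!![a, 0; 0, starRingEnd ℂ a])⁻¹ = !![starRingEnd ℂ a, 0; 0, a] := by
        rw [Matrix.inv_def, hdet, Matrix.adjugate_fin_two]
        simp
      rw [hkinv, hXeta, hYeta, ← h]
      have hva' : starRingEnd ℂ a ^ 2 * starRingEnd ℂ w = starRingEnd ℂ v := by
        have := congrArg (starRingEnd ℂ) hva
        simpa [_root_.map_mul, map_pow] using this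
      ext i j
      fin_cases i <;> fin_cases j <;>
        simp [Matrix.mul_apply, Fin.sum_univ_two] <;>
        first
        | linear_combination z * haa
        | linear_combination starRingEnd ℂ z * haa
        | linear_combination hva
        | linear_combination -hva
        | linear_combination hva'

/-- The (1,1) entry of an SU(2) matrix has absolute value at most 1. -/
lemma su2_abs_le (X : Matrix.specialUnitaryGroup (Fin 2) ℂ) :
    ‖(X : Matrix (Fin 2) (Fin 2) ℂ) 0 0‖ ≤ 1 := by
  have h := (su2_struct X.2).2
  nlinarith [norm_nonneg ((X : Matrix (Fin 2) (Fin 2) ℂ) 0 0),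
    norm_nonneg ((X : Matrix (Fin 2) (Fin 2) ℂ) 0 1),
    sq_nonneg (‖(X : Matrix (Fin 2) (Fin 2) ℂ) 0 0‖ - 1)]

/-- Every point of the closed unit disc is the (1,1) entry of some SU(2) matrix. -/
lemma su2_surj (z : ℂ) (hz : ‖z‖ ≤ 1) :
    ∃ X : Matrix.specialUnitaryGroup (Fin 2) ℂ, (X : Matrix (Fin 2) (Fin 2) ℂ) 0 0 = z := by
  set w : ℝ := Real.sqrt (1 - ‖z‖ ^ 2) with hwdef
  have hz2 : ‖z‖ ^ 2 ≤ 1 := by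
    nlinarith [norm_nonneg z]
  have hw2 : (w : ℝ) ^ 2 = 1 - ‖z‖ ^ 2 := Real.sq_sqrt (by linarith)
  have habs : ‖z‖ ^ 2 + ‖(w : ℂ)‖ ^ 2 = 1 := by
    rw [Complex.norm_real, Real.norm_eq_abs, _root_.abs_of_nonneg (Real.sqrt_nonneg _), hw2]; ring
  exact ⟨⟨_, su2_of z (w : ℂ) habs⟩, by simp⟩

/-- **The orbit space `SU(2)/K` is the closed unit disc.**
The `(1,1)` entry is constant on the conjugation orbits of the diagonal subgroup `K`,
and the induced map from the orbit space `SU(2)/K` to the closed unit disc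
`{z : ℂ | |z| ≤ 1}` is a bijection. -/
theorem stmt7 :
    (∀ X Y : Matrix.specialUnitaryGroup (Fin 2) ℂ, su2OrbitRel X Y →
      (X : Matrix (Fin 2) (Fin 2) ℂ) 0 0 = (Y : Matrix (Fin 2) (Fin 2) ℂ) 0 0) ∧
    (∃ f : Quot su2OrbitRel → {z : ℂ // ‖z‖ ≤ 1},
      (∀ X : Matrix.specialUnitaryGroup (Fin 2) ℂ,
        (f (Quot.mk su2OrbitRel X) : ℂ) = (X : Matrix (Fin 2) (Fin 2) ℂ) 0 0) ∧
      Function.Bijective f) := by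
  refine ⟨su2_const, ?_⟩
  refine ⟨Quot.lift (fun X => (⟨(X : Matrix (Fin 2) (Fin 2) ℂ) 0 0, su2_abs_le X⟩ :
      {z : ℂ // ‖z‖ ≤ 1}))
    (fun X Y h => Subtype.ext (su2_const X Y h)), fun X => rfl, ?_, ?_⟩
  · intro q₁ q₂
    refine Quot.induction_on₂ q₁ q₂ (fun X Y h => ?_)
    exact Quot.sound (su2_rel_of_eq X Y (congrArg Subtype.val h))
  · rintro ⟨z, hz⟩
    obtain ⟨X, hX⟩ := su2_surj z hz
    exact ⟨Quot.mk _ X, Subtype.ext hX⟩
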